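/- If r_D : I → ℝ³ is twice differentiable with r_D(t) ≠ 0 and the radial acceleration vanishes, ⟨r̈_D, r_D⟩ = 0, then d²/dt²(‖r_D‖) = ‖r_D‖·‖Ω‖² where Ω = (r_D × ṙ_D)/‖r_D‖². -/

import Mathlib

open RealInnerProductSpace

noncomputable def cross3 (u v : EuclideanSpace ℝ (Fin 3)) : EuclideanSpace ℝ (Fin 3) :=
  (WithLp.equiv 2 (Fin 3 → ℝ)).symm
    ![u 1 * v 2 - u 2 * v 1, u 2 * v 0 - u 0 * v 2, u 0 * v 1 - u 1 * v 0]

lemma cross3_norm_sq (u v : EuclideanSpace ℝ (Fin 3)) :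
    ‖cross3 u v‖ ^ 2 = ‖u‖ ^ 2 * ‖v‖ ^ 2 - ⟪u, v⟫ ^ 2 := by
  rw [← real_inner_self_eq_norm_sq, ← real_inner_self_eq_norm_sq,
    ← real_inner_self_eq_norm_sq]
  simp only [PiLp.inner_apply, RCLike.inner_apply, conj_trivial, Fin.sum_univ_three, cross3,
    WithLp.equiv_symm_apply, PiLp.toLp_apply, Matrix.cons_val_zero, Matrix.cons_val_one, Matrix.head_cons,
    Matrix.cons_val_two, Matrix.tail_cons]
  ring

theorem radial_range_equation
    (rD : ℝ → EuclideanSpace ℝ (Fin 3))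
    (hr : Differentiable ℝ rD) (hr' : Differentiable ℝ (deriv rD))
    (hne : ∀ t, rD t ≠ 0)
    (Ω : ℝ → EuclideanSpace ℝ (Fin 3))
    (hΩ : ∀ t, Ω t = (‖rD t‖ ^ 2)⁻¹ • cross3 (rD t) (deriv rD t))
    (hrad : ∀ t, ⟪deriv (deriv rD) t, rD t⟫ = 0) :
    ∀ t, deriv (deriv (fun s => ‖rD s‖)) t = ‖rD t‖ * ‖Ω t‖ ^ 2 := by
  intro t
  have hnpos : ∀ s, 0 < ‖rD s‖ := fun s => norm_pos_iff.2 (hne s)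
  -- first derivative of the norm
  have h1 : ∀ s, HasDerivAt (fun u => ‖rD u‖) (⟪deriv rD s, rD s⟫ / ‖rD s‖) s := by
    intro s
    have hg : HasDerivAt (fun u => ⟪rD u, rD u⟫) (2 * ⟪deriv rD s, rD s⟫) s := by
      have := ((hr s).hasDerivAt).inner ℝ ((hr s).hasDerivAt)
      refine this.congr_deriv ?_
      rw [real_inner_comm]; ring
    have hne' : ⟪rD s, rD s⟫ ≠ 0 := by
      rw [real_inner_self_eq_norm_sq]; exact pow_ne_zero _ (hnpos s).ne'
    have := hg.sqrt hne'
    have heq : (fun u => Real.sqrt ⟪rD u, rD u⟫) = fun u => ‖rD u‖ := by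
      funext u
      rw [real_inner_self_eq_norm_sq, Real.sqrt_sq (norm_nonneg _)]
    rw [heq] at this
    convert this using 1
    rw [real_inner_self_eq_norm_sq, Real.sqrt_sq (norm_nonneg _)]
    field_simp
  have hd1 : deriv (fun s => ‖rD s‖) = fun s => ⟪deriv rD s, rD s⟫ / ‖rD s‖ := by
    funext s; exact (h1 s).deriv
  -- second derivative
  have hN : HasDerivAt (fun s => ⟪deriv rD s, rD s⟫)
      (⟪deriv rD t, deriv rD t⟫) t := by
    have := ((hr' t).hasDerivAt).inner ℝ ((hr t).hasDerivAt)
    refine this.congr_deriv ?_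
    rw [hrad t]; ring
  have h2 : HasDerivAt (deriv (fun s => ‖rD s‖))
      ((⟪deriv rD t, deriv rD t⟫ * ‖rD t‖ -
        ⟪deriv rD t, rD t⟫ * (⟪deriv rD t, rD t⟫ / ‖rD t‖)) / ‖rD t‖ ^ 2) t := by
    rw [hd1]
    exact hN.div (h1 t) (hnpos t).ne'
  rw [h2.deriv]
  -- compute the right-hand side
  have hΩn : ‖Ω t‖ ^ 2 = (‖rD t‖ ^ 2)⁻¹ ^ 2 *
      (‖rD t‖ ^ 2 * ‖deriv rD t‖ ^ 2 - ⟪rD t, deriv rD t⟫ ^ 2) := by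
    rw [hΩ t, norm_smul, mul_pow, cross3_norm_sq]
    congr 1
    rw [Real.norm_eq_abs, abs_of_nonneg (by positivity)]
  rw [hΩn, real_inner_self_eq_norm_sq]
  have hcomm : ⟪deriv rD t, rD t⟫ = ⟪rD t, deriv rD t⟫ := real_inner_comm _ _
  rw [hcomm]
  have h0 : ‖rD t‖ ≠ 0 := (hnpos t).ne'
  field_simp
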